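/- Let W ∈ ℂ[z₁,…,z_N] be a nondegenerate quasi-homogeneous polynomial of type (q₁,…,q_N) with all weights qᵢ ≤ 1/2, and set δ̂₀ = (minᵢ qᵢ)/(min_j(1 − q_j)). Let W_l = c·Πᵢ zᵢ^{bᵢ} (c ∈ ℂ, bᵢ ∈ ℕ) be any monomial of quasi-homogeneous weight exactly 1, i.e. Σᵢ qᵢbᵢ = 1. Then there is a constant C > 0 such that for all z ∈ ℂ^N: Σ_{p,q} |∂²W_l/∂z_p∂z_q(z)| ≤ C·(Σᵢ |∂W/∂zᵢ(z)| + 1)^{2 − 2δ̂₀}. -/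

import Mathlib

open MvPolynomial

section AuxLemmas

lemma aux_aeval_scale_monomial {N : ℕ} (k : Fin N → ℕ) (lam : ℂ) (a : Fin N →₀ ℕ) (r : ℂ) :
    aeval (fun i => (C (lam ^ k i) * X i : MvPolynomial (Fin N) ℂ)) (monomial a r)
      = monomial a (lam ^ (∑ i, k i * a i) * r) := by
  rw [aeval_monomial]
  rw [Finsupp.prod_fintype _ _ (fun i => by simp)]
  simp only [mul_pow, ← C_pow, ← pow_mul, Finset.prod_mul_distrib, ← map_prod]
  rw [← Finset.prod_pow_eq_pow_sum]
  rw [monomial_eq, Finsupp.prod_fintype _ _ (fun i => by simp), algebraMap_eq, ← mul_assoc,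
    ← C_mul, mul_comm r]

lemma aux_coeff_scale {N : ℕ} (k : Fin N → ℕ) (lam : ℂ) (p : MvPolynomial (Fin N) ℂ)
    (a : Fin N →₀ ℕ) :
    coeff a (aeval (fun i => (C (lam ^ k i) * X i : MvPolynomial (Fin N) ℂ)) p)
      = lam ^ (∑ i, k i * a i) * coeff a p := by
  induction p using MvPolynomial.induction_on' with
  | monomial u r =>
    rw [aux_aeval_scale_monomial, coeff_monomial, coeff_monomial]
    split_ifs with h
    · subst h; rfl
    · rw [mul_zero]
  | add p q hp hq => rw [map_add, coeff_add, coeff_add, hp, hq, mul_add]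

lemma aux_eval_aeval_scale {N : ℕ} (W : MvPolynomial (Fin N) ℂ) (k : Fin N → ℕ) (lam : ℂ)
    (z : Fin N → ℂ) :
    eval z (aeval (fun i => (C (lam ^ k i) * X i : MvPolynomial (Fin N) ℂ)) W)
        = eval (fun i => lam ^ k i * z i) W := by
  rw [aeval_def, eval_eval₂]
  simp only [map_mul, eval_C, eval_X]
  have h : (eval z).comp (algebraMap ℂ (MvPolynomial (Fin N) ℂ)) = RingHom.id ℂ :=
    RingHom.ext fun r => by simp [algebraMap_eq]
  rw [h, eval₂_id]

lemma aux_support_weight {N : ℕ} (W : MvPolynomial (Fin N) ℂ) (k : Fin N → ℕ) (d : ℕ)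
    (hhom : ∀ (lam : ℂ) (z : Fin N → ℂ),
      eval (fun i => lam ^ (k i) * z i) W = lam ^ d * eval z W) :
    ∀ a ∈ W.support, ∑ i, k i * a i = d := by
  intro a ha
  have ha' : coeff a W ≠ 0 := mem_support_iff.mp ha
  have key : aeval (fun i => (C ((2:ℂ) ^ k i) * X i : MvPolynomial (Fin N) ℂ)) W
      = C ((2:ℂ) ^ d) * W := by
    apply MvPolynomial.funext
    intro z
    rw [aux_eval_aeval_scale, hhom, map_mul, eval_C]
  have h2 := congrArg (coeff a) key
  rw [aux_coeff_scale, coeff_C_mul] at h2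
  have h3 : (2:ℂ) ^ (∑ i, k i * a i) = (2:ℂ) ^ d := mul_right_cancel₀ ha' h2
  have h4 : ((2 ^ (∑ i, k i * a i) : ℕ) : ℂ) = ((2 ^ d : ℕ) : ℂ) := by push_cast; exact h3
  exact Nat.pow_right_injective le_rfl (Nat.cast_injective h4)

lemma aux_eval_monomial {N : ℕ} (z : Fin N → ℂ) (u : Fin N →₀ ℕ) (s : ℂ) :
    eval z (monomial u s) = s * ∏ i, z i ^ u i := by
  rw [eval_monomial, Finsupp.prod_fintype _ _ (fun i => by simp)]

lemma aux_sum_single {N : ℕ} (k : Fin N → ℕ) (j : Fin N) :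
    ∑ i, k i * (Finsupp.single j 1 : Fin N →₀ ℕ) i = k j := by
  rw [Finset.sum_eq_single j]
  · simp
  · intro i _ hij; simp [Finsupp.single_apply, Ne.symm hij]
  · simp

lemma aux_eval_pderiv_monomial_scale {N : ℕ} (k : Fin N → ℕ) (d : ℕ) (lam : ℂ)
    (z : Fin N → ℂ) (j : Fin N) (v : Fin N →₀ ℕ) (r : ℂ)
    (hv : ∑ i, k i * v i = d) :
    eval (fun i => lam ^ k i * z i) (pderiv j (monomial v r))
      = lam ^ (d - k j) * eval z (pderiv j (monomial v r)) := by
  rw [pderiv_monomial, aux_eval_monomial, aux_eval_monomial]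
  rcases Nat.eq_zero_or_pos (v j) with h0 | hpos
  · simp [h0]
  · set u : Fin N →₀ ℕ := v - Finsupp.single j 1 with hu
    have hadd : u + Finsupp.single j 1 = v := by
      ext i
      simp only [Finsupp.add_apply, Finsupp.tsub_apply, hu]
      rcases eq_or_ne i j with rfl | hij
      · simp; omega
      · simp [Finsupp.single_apply, Ne.symm hij, hij]
    have hsum : ∑ i, k i * u i + k j = d := by
      have := congrArg (fun w : Fin N →₀ ℕ => ∑ i, k i * w i) hadd
      simp only [Finsupp.add_apply, mul_add, Finset.sum_add_distrib] at this
      rw [aux_sum_single] at this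
      omega
    have hprod : ∏ i, (lam ^ k i * z i) ^ u i = lam ^ (∑ i, k i * u i) * ∏ i, z i ^ u i := by
      simp only [mul_pow, ← pow_mul, Finset.prod_mul_distrib, Finset.prod_pow_eq_pow_sum]
    rw [hprod]
    have : d - k j = ∑ i, k i * u i := by omega
    rw [this]; ring

lemma aux_grad_scale {N : ℕ} (W : MvPolynomial (Fin N) ℂ) (k : Fin N → ℕ) (d : ℕ)
    (hsupp : ∀ a ∈ W.support, ∑ i, k i * a i = d) (lam : ℂ) (z : Fin N → ℂ) (j : Fin N) :
    eval (fun i => lam ^ k i * z i) (pderiv j W) = lam ^ (d - k j) * eval z (pderiv j W) := by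
  have hW : pderiv j W = ∑ v ∈ W.support, pderiv j (monomial v (coeff v W)) := by
    rw [← map_sum, ← as_sum]
  rw [hW, map_sum, map_sum, Finset.mul_sum]
  exact Finset.sum_congr rfl fun v hv =>
    aux_eval_pderiv_monomial_scale k d lam z j v _ (hsupp v hv)

lemma aux_mono_bound {N : ℕ} (k : Fin N → ℕ) (E : ℕ) (μ : ℝ) (hμ : 1 ≤ μ)
    (z : Fin N → ℂ) (hz : ∀ i, ‖z i‖ ≤ μ ^ k i) (u : Fin N →₀ ℕ) (a : ℂ)
    (h : a ≠ 0 → ∑ i, k i * u i ≤ E) :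
    ‖eval z (monomial u a)‖ ≤ ‖a‖ * μ ^ E := by
  have hμ0 : (0:ℝ) ≤ μ := le_trans zero_le_one hμ
  rcases eq_or_ne a 0 with rfl | hne
  · simp
  · rw [aux_eval_monomial, norm_mul, norm_prod]
    simp only [norm_pow]
    apply mul_le_mul_of_nonneg_left _ (norm_nonneg a)
    calc ∏ i, ‖z i‖ ^ u i ≤ ∏ i, (μ ^ k i) ^ u i := by
          apply Finset.prod_le_prod
          · intro i _; positivity
          · intro i _; exact pow_le_pow_left₀ (norm_nonneg _) (hz i) _
      _ = μ ^ (∑ i, k i * u i) := by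
          simp only [← pow_mul, Finset.prod_pow_eq_pow_sum]
      _ ≤ μ ^ E := pow_le_pow_right₀ hμ (h hne)

lemma aux_second_pderiv_monomial_bound {N : ℕ} (k : Fin N → ℕ) (d k0 : ℕ)
    (hk0 : ∀ i, k0 ≤ k i) (c : ℂ) (b : Fin N →₀ ℕ) (hbw : ∑ i, k i * b i = d)
    (μ : ℝ) (hμ : 1 ≤ μ) (z : Fin N → ℂ) (hz : ∀ i, ‖z i‖ ≤ μ ^ k i) (p r : Fin N) :
    ‖eval z (pderiv p (pderiv r (monomial b c)))‖
      ≤ ‖c‖ * (b r) * (b p) * μ ^ (d - 2 * k0) := by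
  have hμ0 : (0:ℝ) ≤ μ := le_trans zero_le_one hμ
  rw [pderiv_monomial, pderiv_monomial]
  have key : (c * (b r : ℂ) * (((b - Finsupp.single r 1 : Fin N →₀ ℕ)) p : ℂ)) ≠ 0 →
      ∑ i, k i * ((b - Finsupp.single r 1 - Finsupp.single p 1 : Fin N →₀ ℕ) i)
        ≤ d - 2 * k0 := by
    intro hne
    have hbr : 1 ≤ b r := by
      rcases Nat.eq_zero_or_pos (b r) with h | h
      · exact absurd (by simp [h]) hne
      · exact h
    have hbp' : 1 ≤ ((b - Finsupp.single r 1 : Fin N →₀ ℕ)) p := by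
      rcases Nat.eq_zero_or_pos (((b - Finsupp.single r 1 : Fin N →₀ ℕ)) p) with h | h
      · exact absurd (by simp [h]) hne
      · exact h
    rw [Finsupp.tsub_apply] at hbp'
    have hadd : ∀ j, ((b - Finsupp.single r 1 - Finsupp.single p 1 : Fin N →₀ ℕ)) j
        + (Finsupp.single p 1 : Fin N →₀ ℕ) j + (Finsupp.single r 1 : Fin N →₀ ℕ) j = b j := by
      intro j
      simp only [Finsupp.tsub_apply, Finsupp.single_apply] at hbp' ⊢
      by_cases hrj : r = j <;> by_cases hpj : p = j <;> by_cases hrp : r = p <;>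
        simp_all <;> omega
    have hsum : ∑ i, k i * ((b - Finsupp.single r 1 - Finsupp.single p 1 : Fin N →₀ ℕ) i)
        + k p + k r = d := by
      have h1 : ∑ i, k i * b i
          = ∑ i, k i * ((b - Finsupp.single r 1 - Finsupp.single p 1 : Fin N →₀ ℕ) i)
            + ∑ i, k i * ((Finsupp.single p 1 : Fin N →₀ ℕ) i)
            + ∑ i, k i * ((Finsupp.single r 1 : Fin N →₀ ℕ) i) := by
        rw [← Finset.sum_add_distrib, ← Finset.sum_add_distrib]
        exact Finset.sum_congr rfl fun i _ => by rw [← mul_add, ← mul_add, hadd i]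
      rw [aux_sum_single, aux_sum_single, hbw] at h1
      omega
    have := hk0 p; have := hk0 r; omega
  calc ‖eval z (monomial (b - Finsupp.single r 1 - Finsupp.single p 1)
          (c * (b r : ℂ) * (((b - Finsupp.single r 1 : Fin N →₀ ℕ)) p : ℂ)))‖
      ≤ ‖c * (b r : ℂ) * (((b - Finsupp.single r 1 : Fin N →₀ ℕ)) p : ℂ)‖ * μ ^ (d - 2 * k0) :=
        aux_mono_bound k (d - 2 * k0) μ hμ z hz _ _ key
    _ ≤ ‖c‖ * (b r) * (b p) * μ ^ (d - 2 * k0) := by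
        apply mul_le_mul_of_nonneg_right _ (by positivity)
        simp only [norm_mul, Complex.norm_natCast]
        have hle' : ((((b - Finsupp.single r 1 : Fin N →₀ ℕ)) p : ℕ) : ℝ) ≤ (b p : ℝ) := by
          have : ((b - Finsupp.single r 1 : Fin N →₀ ℕ)) p ≤ b p := by
            rw [Finsupp.tsub_apply]; omega
          exact_mod_cast this
        exact mul_le_mul_of_nonneg_left hle' (by positivity)

lemma aux_min_on_sphere {N : ℕ} (hN : 1 ≤ N) (W : MvPolynomial (Fin N) ℂ)
    (hnd : ∀ z : Fin N → ℂ, (∀ i, eval z (pderiv i W) = 0) → z = 0) :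
    ∃ c₀ : ℝ, 0 < c₀ ∧ ∀ w : Fin N → ℂ, ‖w‖ = 1 → c₀ ≤ ∑ i, ‖eval w (pderiv i W)‖ := by
  haveI : Nonempty (Fin N) := ⟨⟨0, hN⟩⟩
  set F : (Fin N → ℂ) → ℝ := fun w => ∑ i, ‖eval w (pderiv i W)‖ with hF
  have hFc : Continuous F := by
    apply continuous_finset_sum
    intro i _
    exact (MvPolynomial.continuous_eval (pderiv i W)).norm
  have hcpt : IsCompact (Metric.sphere (0 : Fin N → ℂ) 1) := isCompact_sphere 0 1
  have hne : (Metric.sphere (0 : Fin N → ℂ) 1).Nonempty := by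
    refine ⟨fun _ => 1, ?_⟩
    rw [Metric.mem_sphere, dist_zero_right]
    rw [pi_norm_const]
    simp
  obtain ⟨w₀, hw₀, hmin⟩ := hcpt.exists_isMinOn hne hFc.continuousOn
  refine ⟨F w₀, ?_, ?_⟩
  · rcases (Finset.sum_nonneg (fun i _ => norm_nonneg _) : (0:ℝ) ≤ F w₀).lt_or_eq with h | h
    · exact h
    · exfalso
      have hzero : ∀ i, eval w₀ (pderiv i W) = 0 := by
        intro i
        have := (Finset.sum_eq_zero_iff_of_nonneg (fun i _ => norm_nonneg _)).mp h.symm i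
          (Finset.mem_univ i)
        exact norm_eq_zero.mp this
      have := hnd w₀ hzero
      rw [Metric.mem_sphere, dist_zero_right] at hw₀
      rw [this] at hw₀
      simp at hw₀
  · intro w hw
    exact hmin (by rw [Metric.mem_sphere, dist_zero_right]; exact hw)

end AuxLemmas

set_option maxHeartbeats 1600000 in
/-- **Second-derivative estimate for a weight-one monomial.**
Let `W` be a nondegenerate quasi-homogeneous polynomial of type `(q₁,…,q_N)` with all
weights `qᵢ ≤ 1/2`; put `δ̂₀ = (minᵢ qᵢ)/(min_j (1 − q_j))`.  If `W_l = c·Πᵢ zᵢ^{bᵢ}`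
is a monomial of quasi-homogeneous weight exactly `1`, then there is `C > 0` with
`Σ_{p,r}|∂²W_l/∂z_p∂z_r(z)| ≤ C·(Σᵢ|∂W/∂zᵢ(z)| + 1)^{2 − 2δ̂₀}` for all `z ∈ ℂ^N`. -/
theorem second_derivative_estimate_weight_one_monomial
    (N : ℕ) (hN : 1 ≤ N) (W : MvPolynomial (Fin N) ℂ)
    (q : Fin N → ℚ) (k : Fin N → ℕ) (d : ℕ)
    (hk : ∀ i, 0 < k i) (hd : 0 < d)
    (hq : ∀ i, q i = (k i : ℚ) / (d : ℚ))
    (hq0 : ∀ i, 0 < q i) (hq1 : ∀ i, q i < 1)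
    (hhom : ∀ (lam : ℂ) (z : Fin N → ℂ),
      eval (fun i => lam ^ (k i) * z i) W = lam ^ d * eval z W)
    (hnd : ∀ z : Fin N → ℂ, (∀ i, eval z (pderiv i W) = 0) → z = 0)
    (hhalf : ∀ i, q i ≤ 1 / 2)
    -- `qm = minᵢ qᵢ` and `m = min_j (1 − q_j)`, so `δ̂₀ = qm / m`
    (qm : ℚ) (hqm : ∀ i, qm ≤ q i) (hqm' : ∃ i, q i = qm)
    (m : ℚ) (hm : ∀ j, m ≤ 1 - q j) (hm' : ∃ j, 1 - q j = m)
    -- the monomial `W_l = c·Πᵢ zᵢ^{bᵢ}` of quasi-homogeneous weight `1`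
    (c : ℂ) (b : Fin N →₀ ℕ) (hb : ∑ i, q i * (b i : ℚ) = 1) :
    ∃ C : ℝ, 0 < C ∧ ∀ z : Fin N → ℂ,
      (∑ p, ∑ r, ‖eval z (pderiv p (pderiv r (monomial b c)))‖)
        ≤ C * (∑ i, ‖eval z (pderiv i W)‖ + 1) ^ (((2 - 2 * (qm / m) : ℚ) : ℝ)) := by
  haveI hfne : Nonempty (Fin N) := ⟨⟨0, hN⟩⟩
  obtain ⟨i₀, hi₀⟩ := hqm'
  obtain ⟨j₀, hj₀⟩ := hm'
  have hdQ : (0:ℚ) < (d:ℚ) := by exact_mod_cast hd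
  have hd0 : (d:ℚ) ≠ 0 := hdQ.ne'
  have hkd : ∀ i, k i < d := by
    intro i
    have h := hq1 i
    rw [hq i, div_lt_one hdQ] at h
    exact_mod_cast h
  set k0 := k i₀ with hk0def
  set m0 := d - k j₀ with hm0def
  have hk0le : ∀ i, k0 ≤ k i := by
    intro i
    have h1 := hqm i
    rw [← hi₀, hq i₀, hq i, div_le_div_iff_of_pos_right hdQ] at h1
    exact_mod_cast h1
  have hkmax : ∀ i, k i ≤ k j₀ := by
    intro i
    have h1 := hm i
    rw [← hj₀] at h1
    have h2 : q i ≤ q j₀ := by linarith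
    rw [hq i, hq j₀, div_le_div_iff_of_pos_right hdQ] at h2
    exact_mod_cast h2
  have hm0le : ∀ i, m0 ≤ d - k i := fun i => by have := hkmax i; omega
  have h2k0 : 2 * k0 ≤ d := by
    have h := hhalf i₀
    rw [hq i₀, div_le_div_iff₀ hdQ (by norm_num : (0:ℚ) < 2)] at h
    have h' : (2 * k i₀ : ℚ) ≤ (d : ℚ) := by linarith
    exact_mod_cast h'
  have h2kj : 2 * k j₀ ≤ d := by
    have h := hhalf j₀
    rw [hq j₀, div_le_div_iff₀ hdQ (by norm_num : (0:ℚ) < 2)] at h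
    have h' : (2 * k j₀ : ℚ) ≤ (d : ℚ) := by linarith
    exact_mod_cast h'
  have hm0pos : 0 < m0 := by have := hkd j₀; omega
  have hd2m0 : d ≤ 2 * m0 := by have := hkd j₀; omega
  have hk0m0 : k0 ≤ m0 := by omega
  have hbk : ∑ i, k i * b i = d := by
    have h1 := hb
    simp only [hq, div_mul_eq_mul_div, ← Finset.sum_div] at h1
    rw [div_eq_one_iff_eq hd0] at h1
    exact_mod_cast h1
  have hsupp := aux_support_weight W k d hhom
  obtain ⟨c₀, hc₀, hmin⟩ := aux_min_on_sphere hN W hnd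
  -- the exponent
  set eE : ℝ := ((2 - 2 * (qm / m) : ℚ) : ℝ) with heEdef
  have hqmv : qm = (k0:ℚ)/d := by rw [← hi₀, hq i₀]
  have hmv : m = (m0:ℚ)/d := by
    rw [← hj₀, hq j₀, hm0def]
    rw [Nat.cast_sub (le_of_lt (hkd j₀))]
    field_simp
  have hdiv : qm / m = (k0:ℚ)/(m0:ℚ) := by
    rw [hqmv, hmv]
    rw [div_div_div_cancel_right₀]
    exact hd0
  have heE : eE = 2 - 2*((k0:ℝ)/(m0:ℝ)) := by
    rw [heEdef, hdiv]; push_cast; ring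
  have hm0R : (0:ℝ) < (m0:ℝ) := by exact_mod_cast hm0pos
  have heE0 : (0:ℝ) ≤ eE := by
    rw [heE]
    have h1 : (k0:ℝ)/(m0:ℝ) ≤ 1 := by
      rw [div_le_one hm0R]
      exact_mod_cast hk0m0
    linarith
  set E : ℕ := 2*m0 - 2*k0 with hEdef
  have hm0eE : (m0:ℝ) * eE = (E:ℝ) := by
    have hEcast : (E:ℝ) = 2*(m0:ℝ) - 2*(k0:ℝ) := by
      rw [hEdef, Nat.cast_sub (by omega)]
      push_cast; ring
    rw [heE, hEcast]
    field_simp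
  have hdE : d - 2*k0 ≤ E := by omega
  clear_value eE E
  clear_value k0 m0
  -- the constants
  set B : ℝ := ∑ p : Fin N, ∑ r : Fin N, ‖c‖ * (b r : ℝ) * (b p : ℝ) with hBdef
  have hB0 : (0:ℝ) ≤ B :=
    Finset.sum_nonneg fun p _ => Finset.sum_nonneg fun r _ => by positivity
  set c' : ℝ := min c₀ 1 with hc'def
  have hc'0 : 0 < c' := lt_min hc₀ one_pos
  have hXpos : (0:ℝ) < (c'⁻¹) ^ eE := Real.rpow_pos_of_pos (by positivity) eE
  have hc'c₀ : c' ≤ c₀ := min_le_left _ _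
  have hc'0le : (0:ℝ) ≤ c' := hc'0.le
  clear_value c'
  refine ⟨(B+1) * ((c'⁻¹) ^ eE + 1), by positivity, ?_⟩
  intro z
  set S : ℝ := ∑ i, ‖eval z (pderiv i W)‖ with hSdef
  have hS0 : 0 ≤ S := Finset.sum_nonneg fun i _ => norm_nonneg _
  have hS1 : (1:ℝ) ≤ S + 1 := by linarith
  have hrpow1 : 1 ≤ (S+1) ^ eE := by
    calc (1:ℝ) = 1 ^ eE := (Real.one_rpow eE).symm
      _ ≤ (S+1)^eE := Real.rpow_le_rpow zero_le_one hS1 heE0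
  have hLHS : ∀ μ : ℝ, 1 ≤ μ → (∀ i, ‖z i‖ ≤ μ ^ k i) →
      (∑ p, ∑ r, ‖eval z (pderiv p (pderiv r (monomial b c)))‖) ≤ B * μ ^ (d - 2*k0) := by
    intro μ hμ hz
    rw [hBdef, Finset.sum_mul]
    apply Finset.sum_le_sum; intro p _
    rw [Finset.sum_mul]
    apply Finset.sum_le_sum; intro r _
    exact aux_second_pderiv_monomial_bound k d k0 hk0le c b hbk μ hμ z hz p r
  clear_value B
  set f : Fin N → ℝ := fun i => ‖z i‖ ^ ((k i : ℝ))⁻¹ with hfdef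
  have hf0 : ∀ i, 0 ≤ f i := fun i => Real.rpow_nonneg (norm_nonneg _) _
  set lam : ℝ := Finset.univ.sup' Finset.univ_nonempty f with hlamdef
  have hpowf : ∀ i, (f i) ^ (k i) = ‖z i‖ := by
    intro i
    rw [hfdef]
    simp only
    rw [← Real.rpow_natCast (_ ^ _) (k i), ← Real.rpow_mul (norm_nonneg _),
      inv_mul_cancel₀ (by exact_mod_cast (hk i).ne' : ((k i:ℕ):ℝ) ≠ 0), Real.rpow_one]
  have hzlam : ∀ i, ‖z i‖ ≤ lam ^ (k i) := by
    intro i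
    rw [← hpowf i]
    exact pow_le_pow_left₀ (hf0 i) (Finset.le_sup' f (Finset.mem_univ i)) _
  obtain ⟨i₁, -, hi₁⟩ := Finset.exists_mem_eq_sup' Finset.univ_nonempty f
  have hzi₁ : lam ^ (k i₁) = ‖z i₁‖ := by
    rw [hlamdef, hi₁]
    exact hpowf i₁
  have hlamnn : (0:ℝ) ≤ lam := by
    rw [hlamdef, hi₁]
    exact hf0 i₁
  clear_value lam f
  clear_value S
  rcases le_or_gt lam 1 with hl1 | hl1
  · -- small region : lam ≤ 1
    have hz1 : ∀ i, ‖z i‖ ≤ (1:ℝ) ^ (k i) := by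
      intro i
      rw [one_pow]
      exact le_trans (hzlam i) (pow_le_one₀ hlamnn hl1)
    have h1 := hLHS 1 le_rfl hz1
    rw [one_pow, mul_one] at h1
    calc (∑ p, ∑ r, ‖eval z (pderiv p (pderiv r (monomial b c)))‖) ≤ B := h1
      _ ≤ (B+1) * ((c'⁻¹) ^ eE + 1) := by nlinarith
      _ ≤ (B+1) * ((c'⁻¹) ^ eE + 1) * ((S+1) ^ eE) :=
          le_mul_of_one_le_right (by positivity) hrpow1
  · -- large region : lam > 1
    have hlam0 : (0:ℝ) < lam := lt_trans one_pos hl1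
    set w : Fin N → ℂ := fun i => z i / (((lam:ℝ):ℂ) ^ (k i)) with hwdef
    have hlamC : (((lam:ℝ):ℂ)) ≠ 0 := by exact_mod_cast hlam0.ne'
    have hzw : z = fun i => (((lam:ℝ):ℂ)) ^ (k i) * w i := by
      funext i
      rw [hwdef]
      field_simp
    have hnormlam : ∀ n : ℕ, ‖(((lam:ℝ):ℂ))^n‖ = lam ^ n := by
      intro n
      rw [norm_pow, Complex.norm_real, Real.norm_eq_abs, abs_of_pos hlam0]
    have hwle : ∀ i, ‖w i‖ ≤ 1 := by
      intro i
      rw [hwdef]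
      simp only
      rw [norm_div, hnormlam]
      rw [div_le_one (by positivity)]
      exact hzlam i
    have hw1 : ‖w‖ = 1 := by
      apply le_antisymm
      · exact (pi_norm_le_iff_of_nonneg zero_le_one).mpr hwle
      · have hwi₁ : ‖w i₁‖ = 1 := by
          rw [hwdef]
          simp only
          rw [norm_div, hnormlam, ← hzi₁]
          exact div_self (by positivity)
        calc (1:ℝ) = ‖w i₁‖ := hwi₁.symm
          _ ≤ ‖w‖ := norm_le_pi_norm w i₁
    have hFw : c₀ ≤ ∑ i, ‖eval w (pderiv i W)‖ := hmin w hw1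
    have hSeq : ∀ j, ‖eval z (pderiv j W)‖ = lam ^ (d - k j) * ‖eval w (pderiv j W)‖ := by
      intro j
      conv_lhs => rw [hzw]
      rw [aux_grad_scale W k d hsupp _ w j, norm_mul, hnormlam]
    have hSlow : c' * lam ^ m0 ≤ S + 1 := by
      have h1 : lam ^ m0 * c₀ ≤ S := by
        calc lam ^ m0 * c₀ ≤ lam ^ m0 * ∑ i, ‖eval w (pderiv i W)‖ :=
              mul_le_mul_of_nonneg_left hFw (by positivity)
          _ = ∑ i, lam ^ m0 * ‖eval w (pderiv i W)‖ := Finset.mul_sum _ _ _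
          _ ≤ ∑ i, lam ^ (d - k i) * ‖eval w (pderiv i W)‖ := by
              apply Finset.sum_le_sum; intro i _
              exact mul_le_mul_of_nonneg_right
                (pow_le_pow_right₀ hl1.le (hm0le i)) (norm_nonneg _)
          _ = S := by
              rw [hSdef]
              exact Finset.sum_congr rfl fun i _ => (hSeq i).symm
      calc c' * lam ^ m0 ≤ c₀ * lam ^ m0 :=
            mul_le_mul_of_nonneg_right hc'c₀ (pow_nonneg hlam0.le _)
        _ = lam ^ m0 * c₀ := mul_comm _ _
        _ ≤ S := h1
        _ ≤ S + 1 := by linarith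
    have hch : lam ^ (d - 2*k0) ≤ (c'⁻¹) ^ eE * (S+1) ^ eE := by
      have h1 : (c' * lam ^ m0) ^ eE ≤ (S+1) ^ eE :=
        Real.rpow_le_rpow (by positivity) hSlow heE0
      have h2 : (c' * lam ^ m0) ^ eE = c' ^ eE * lam ^ E := by
        rw [Real.mul_rpow hc'0.le (by positivity)]
        congr 1
        rw [← Real.rpow_natCast lam m0, ← Real.rpow_mul hlam0.le, hm0eE, Real.rpow_natCast]
      have h3 : lam ^ (d - 2*k0) ≤ lam ^ E := pow_le_pow_right₀ hl1.le hdE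
      have h4 : c' ^ eE * lam ^ E ≤ (S+1)^eE := by rw [← h2]; exact h1
      have h5 : 0 < c' ^ eE := Real.rpow_pos_of_pos hc'0 eE
      calc lam ^ (d-2*k0) ≤ lam ^ E := h3
        _ = (c'^eE)⁻¹ * (c'^eE * lam^E) := by rw [← mul_assoc, inv_mul_cancel₀ h5.ne', one_mul]
        _ ≤ (c'^eE)⁻¹ * (S+1)^eE := mul_le_mul_of_nonneg_left h4 (by positivity)
        _ = (c'⁻¹)^eE * (S+1)^eE := by rw [Real.inv_rpow hc'0.le]
    calc (∑ p, ∑ r, ‖eval z (pderiv p (pderiv r (monomial b c)))‖)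
        ≤ B * lam ^ (d-2*k0) := hLHS lam hl1.le hzlam
      _ ≤ B * ((c'⁻¹)^eE * (S+1)^eE) := mul_le_mul_of_nonneg_left hch hB0
      _ ≤ (B+1) * ((c'⁻¹) ^ eE + 1) * ((S+1)^eE) := by
          rw [← mul_assoc]
          apply mul_le_mul_of_nonneg_right _ (by positivity)
          nlinarith
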